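/- (Incentive compatibility of the discrete Myerson payment rule.) Let T be a natural number, let θ : Fin(T+1) → ℝ be strictly increasing (θ_0 < θ_1 < ... < θ_T), and let x : Fin(T+1) → ℝ be monotonically nondecreasing. Define the payment rule p(τ) = θ_τ·x(τ) − Σ_{j=1}^{τ} (θ_j − θ_{j−1})·x(j−1). Then for every t, τ ∈ Fin(T+1): θ_t·x(t) − p(t) ≥ θ_t·x(τ) − p(τ); that is, a buyer with true value θ_t maximizes its utility by bidding θ_t rather than any other value θ_τ in the domain. -/

import Mathlib

open Fin.NatCast in
/-- incentive compatibility of the discrete Myerson payment rule. -/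
theorem discrete_myerson_payment_IC
    (T : ℕ) (θ : Fin (T + 1) → ℝ) (hθ : StrictMono θ)
    (x : Fin (T + 1) → ℝ) (hx : Monotone x)
    (p : Fin (T + 1) → ℝ)
    (hp : ∀ τ : Fin (T + 1),
      p τ = θ τ * x τ -
        ∑ j ∈ Finset.range (τ : ℕ),
          (θ ((j + 1 : ℕ) : Fin (T + 1)) - θ ((j : ℕ) : Fin (T + 1))) *
            x ((j : ℕ) : Fin (T + 1))) :
    ∀ t τ : Fin (T + 1), θ t * x t - p t ≥ θ t * x τ - p τ := by
  intro t τ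
  set S : Fin (T + 1) → ℝ := fun σ =>
    ∑ j ∈ Finset.range (σ : ℕ),
      (θ ((j + 1 : ℕ) : Fin (T + 1)) - θ ((j : ℕ) : Fin (T + 1))) *
        x ((j : ℕ) : Fin (T + 1)) with hS
  have hcast : ∀ j : ℕ, j < T + 1 → ((j : Fin (T + 1)) : ℕ) = j := by
    intro j hj; exact Fin.val_cast_of_lt hj
  have key : ∀ a b : Fin (T + 1), a ≤ b →
      S b - S a = ∑ j ∈ Finset.Ico (a : ℕ) (b : ℕ),
        (θ ((j + 1 : ℕ) : Fin (T + 1)) - θ ((j : ℕ) : Fin (T + 1))) *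
          x ((j : ℕ) : Fin (T + 1)) := by
    intro a b hab
    have h1 := Finset.sum_Ico_consecutive
      (f := fun j => (θ ((j + 1 : ℕ) : Fin (T + 1)) - θ ((j : ℕ) : Fin (T + 1))) *
        x ((j : ℕ) : Fin (T + 1))) (Nat.zero_le (a : ℕ)) (Fin.le_def.mp hab)
    simp only [hS]
    rw [Finset.range_eq_Ico, Finset.range_eq_Ico, ← h1]
    ring
  have tele : ∀ a b : Fin (T + 1), a ≤ b →
      ∑ j ∈ Finset.Ico (a : ℕ) (b : ℕ),
        (θ ((j + 1 : ℕ) : Fin (T + 1)) - θ ((j : ℕ) : Fin (T + 1))) = θ b - θ a := by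
    intro a b hab
    rw [Finset.sum_Ico_eq_sub _ (Fin.le_def.mp hab),
      Finset.sum_range_sub (fun j => θ ((j : ℕ) : Fin (T + 1))),
      Finset.sum_range_sub (fun j => θ ((j : ℕ) : Fin (T + 1)))]
    simp [Fin.cast_val_eq_self]
  have main : S t - S τ ≥ (θ t - θ τ) * x τ := by
    rcases le_total τ t with h | h
    · rw [key τ t h, ← tele τ t h, Finset.sum_mul]
      apply Finset.sum_le_sum
      intro j hj
      simp only [Finset.mem_Ico] at hj
      have htl := t.isLt
      have hjT : j < T + 1 := by omega
      have hj1T : j + 1 < T + 1 := by omega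
      have hθpos : θ ((j : ℕ) : Fin (T + 1)) ≤ θ ((j + 1 : ℕ) : Fin (T + 1)) := by
        apply hθ.monotone
        rw [Fin.le_def, hcast j hjT, hcast (j + 1) hj1T]
        omega
      have hxge : x τ ≤ x ((j : ℕ) : Fin (T + 1)) := by
        apply hx
        rw [Fin.le_def, hcast j hjT]
        exact hj.1
      exact mul_le_mul_of_nonneg_left hxge (by linarith)
    · have h2 := key t τ h
      have h3 := tele t τ h
      have hsum : ∑ j ∈ Finset.Ico (t : ℕ) (τ : ℕ),
          (θ ((j + 1 : ℕ) : Fin (T + 1)) - θ ((j : ℕ) : Fin (T + 1))) *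
            x ((j : ℕ) : Fin (T + 1)) ≤ (θ τ - θ t) * x τ := by
        rw [← h3, Finset.sum_mul]
        apply Finset.sum_le_sum
        intro j hj
        simp only [Finset.mem_Ico] at hj
        have htl := τ.isLt
        have hjT : j < T + 1 := by omega
        have hj1T : j + 1 < T + 1 := by omega
        have hθpos : θ ((j : ℕ) : Fin (T + 1)) ≤ θ ((j + 1 : ℕ) : Fin (T + 1))  := by
          apply hθ.monotone
          rw [Fin.le_def, hcast j hjT, hcast (j + 1) hj1T]
          omega
        have hxle : x ((j : ℕ) : Fin (T + 1)) ≤ x τ := by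
          apply hx
          rw [Fin.le_def, hcast j hjT]
          omega
        exact mul_le_mul_of_nonneg_left hxle (by linarith)
      linarith [h2, hsum]
  have hmain' : θ t * x τ - θ τ * x τ ≤ S t - S τ := by nlinarith [main]
  have hpt : p t = θ t * x t - S t := hp t
  have hpτ : p τ = θ τ * x τ - S τ := hp τ
  rw [hpt, hpτ]
  linarith
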